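/- Let R be a commutative ring with invertible elements x, y, and let M₊ = !![1−x, −y; −x·y⁻¹, 0], M₋ = !![0, −x⁻¹·y; −y⁻¹, 1−x⁻¹]. Let n ≥ 1, ε : Fin n → Bool, σ a permutation of Fin n × Fin 2 with block-diagonal matrix M and permutation matrix P. Fix two distinct indices (i,a) ≠ (j,b) in Fin n × Fin 2. On Fin (n+2) × Fin 2 (adjoining two new crossings c₁, c₂, with ε'(c₁) = true, i.e. positive, and ε'(c₂) = false, i.e. negative, and ε' = ε on old crossings) define the permutation σ' by: σ'(i,a) = (c₁,0), σ'(c₁,0) = (c₂,0), σ'(c₂,0) = σ(i,a), σ'(j,b) = (c₁,1), σ'(c₁,1) = (c₂,1), σ'(c₂,1) = σ(j,b), and σ' = σ on all other indices. Let M' and P' be the corresponding block-diagonal matrix and permutation matrix on Fin (n+2) × Fin 2. Then det(M' − P') = det(M − P). -/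

import Mathlib

/-- The local crossing matrix assigned to a positive classical crossing in the
Jaeger–Kauffman–Saleur determinant model. -/
def Mpos {R : Type*} [CommRing R] (x y : Rˣ) : Matrix (Fin 2) (Fin 2) R :=
  !![1 - (x : R), -(y : R); -((x : R) * ((y⁻¹ : Rˣ) : R)), 0]

/-- The local crossing matrix assigned to a negative classical crossing. -/
def Mneg {R : Type*} [CommRing R] (x y : Rˣ) : Matrix (Fin 2) (Fin 2) R :=
  !![0, -(((x⁻¹ : Rˣ) : R) * (y : R)); -((y⁻¹ : Rˣ) : R), 1 - ((x⁻¹ : Rˣ) : R)]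

/-- The block-diagonal matrix indexed by `ι × Fin 2` whose diagonal `2×2` block at
index `i` is `blk i`. -/
def blockDiag {R : Type*} [CommRing R] {ι : Type*} [DecidableEq ι]
    (blk : ι → Matrix (Fin 2) (Fin 2) R) : Matrix (ι × Fin 2) (ι × Fin 2) R :=
  fun p q => if p.1 = q.1 then blk p.1 p.2 q.2 else 0

/-- The permutation matrix of `σ`: entry `1` at position `(p, σ p)` and `0` elsewhere. -/
def permMat (R : Type*) [CommRing R] {ι : Type*} [DecidableEq ι] (σ : Equiv.Perm ι) :
    Matrix ι ι R :=
  fun p q => if σ p = q then 1 else 0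

namespace RIIAux

open Matrix

/-- The equivalence `Fin 2 × Fin 2 ≃ Fin 4`, sending `(s₁,s₂)` to `2*s₁+s₂`. -/
def e4 : Fin 2 × Fin 2 ≃ Fin 4 where
  toFun s := ⟨2 * s.1.1 + s.2.1, by omega⟩
  invFun k := (⟨k.1 / 2, by omega⟩, ⟨k.1 % 2, by omega⟩)
  left_inv := by decide
  right_inv := by decide

variable {R : Type*} [CommRing R]

def B4 (x y : Rˣ) : Matrix (Fin 4) (Fin 4) R :=
  !![1 - (x:R), -(y:R), -1, 0;
     -((x:R) * ((y⁻¹:Rˣ):R)), 0, 0, -1;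
     0, 0, 0, -(((x⁻¹:Rˣ):R) * (y:R));
     0, 0, -((y⁻¹:Rˣ):R), 1 - ((x⁻¹:Rˣ):R)]

def B4inv (x y : Rˣ) : Matrix (Fin 4) (Fin 4) R :=
  !![0, -(((x⁻¹:Rˣ):R) * (y:R)), 1, 0;
     -((y⁻¹:Rˣ):R), 1 - ((x⁻¹:Rˣ):R), 0, 1;
     0, 0, 1 - (x:R), -(y:R);
     0, 0, -((x:R) * ((y⁻¹:Rˣ):R)), 0]

lemma B4_mul_B4inv (x y : Rˣ) : B4 (R := R) x y * B4inv x y = 1 := by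
  have hx : (x:R) * ((x⁻¹:Rˣ):R) = 1 := by
    rw [← Units.val_mul, mul_inv_cancel, Units.val_one]
  have hy : (y:R) * ((y⁻¹:Rˣ):R) = 1 := by
    rw [← Units.val_mul, mul_inv_cancel, Units.val_one]
  ext i j
  fin_cases i <;> fin_cases j <;>
    simp [B4, B4inv, Matrix.mul_apply, Fin.sum_univ_four, Matrix.one_apply, Matrix.vecHead, Matrix.vecTail] <;>
    first
      | ring1
      | linear_combination hy
      | linear_combination (y:R) * hx
      | linear_combination ((y⁻¹:Rˣ):R) * hx
      | linear_combination (y:R) * ((y⁻¹:Rˣ):R) * hx + hy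
      | linear_combination ((y:R) * ((y⁻¹:Rˣ):R)) * hx + hy

lemma B4inv_mul_B4 (x y : Rˣ) : B4inv (R := R) x y * B4 x y = 1 := by
  have hx : (x:R) * ((x⁻¹:Rˣ):R) = 1 := by
    rw [← Units.val_mul, mul_inv_cancel, Units.val_one]
  have hy : (y:R) * ((y⁻¹:Rˣ):R) = 1 := by
    rw [← Units.val_mul, mul_inv_cancel, Units.val_one]
  ext i j
  fin_cases i <;> fin_cases j <;>
    simp [B4, B4inv, Matrix.mul_apply, Fin.sum_univ_four, Matrix.one_apply, Matrix.vecHead, Matrix.vecTail] <;>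
    first
      | ring1
      | linear_combination hy
      | linear_combination (y:R) * hx
      | linear_combination ((y⁻¹:Rˣ):R) * hx
      | linear_combination (y:R) * ((y⁻¹:Rˣ):R) * hx + hy
      | linear_combination ((y:R) * ((y⁻¹:Rˣ):R)) * hx + hy

lemma det_B4 (x y : Rˣ) : (B4 (R := R) x y).det = 1 := by
  have hx : (x:R) * ((x⁻¹:Rˣ):R) = 1 := by
    rw [← Units.val_mul, mul_inv_cancel, Units.val_one]
  have hy : (y:R) * ((y⁻¹:Rˣ):R) = 1 := by
    rw [← Units.val_mul, mul_inv_cancel, Units.val_one]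
  rw [B4]
  simp [Matrix.det_succ_row_zero, Fin.sum_univ_succ, Fin.succAbove,
    Matrix.vecHead, Matrix.vecTail, - Fin.val_fin_lt, - Fin.lt_def]
  ring_nf
  linear_combination ((y:R)*((y⁻¹:Rˣ):R)*(1-(y:R)*((y⁻¹:Rˣ):R)))*hx - (y:R)*((y⁻¹:Rˣ):R)*hy
    + ((y:R)*((y⁻¹:Rˣ):R))^2*hx + ((y:R)*((y⁻¹:Rˣ):R)+1)*hy


/-- The bottom-right `4×4` block, written over the index type `Fin 2 × Fin 2`
in the same shape as the big matrix. -/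
def BM {R : Type*} [CommRing R] (x y : Rˣ) : Matrix (Fin 2 × Fin 2) (Fin 2 × Fin 2) R :=
  fun s t => (if s.1 = t.1 then (if s.1 = 0 then Mpos x y else Mneg x y) s.2 t.2 else 0)
    - (if s.1 = 0 ∧ t = (1, s.2) then 1 else 0)

lemma BM_eq {R : Type*} [CommRing R] (x y : Rˣ) :
    BM (R := R) x y = (B4 x y).submatrix e4 e4 := by
  ext s t
  obtain ⟨s1, s2⟩ := s
  obtain ⟨t1, t2⟩ := t
  fin_cases s1 <;> fin_cases s2 <;> fin_cases t1 <;> fin_cases t2 <;>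
    simp [BM, B4, e4, Mpos, Mneg, Matrix.submatrix_apply, Prod.ext_iff,
      Matrix.vecHead, Matrix.vecTail]

variable {n : ℕ}

/-- Top-left block: the old block-diagonal matrix minus the permutation matrix with
rows `ia`, `jb` deleted. -/
def A11 {R : Type*} [CommRing R] (blkO : Fin n → Matrix (Fin 2) (Fin 2) R)
    (σ : Equiv.Perm (Fin n × Fin 2)) (ia jb : Fin n × Fin 2) :
    Matrix (Fin n × Fin 2) (Fin n × Fin 2) R :=
  fun p q => blockDiag blkO p q - (if p ≠ ia ∧ p ≠ jb ∧ σ p = q then 1 else 0)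

/-- Top-right block. -/
def CM (R : Type*) [CommRing R] (ia jb : Fin n × Fin 2) :
    Matrix (Fin n × Fin 2) (Fin 2 × Fin 2) R :=
  fun p s => if p = ia ∧ s = (0, 0) then -1 else if p = jb ∧ s = (0, 1) then -1 else 0

/-- Bottom-left block. -/
def DM (R : Type*) [CommRing R] (σ : Equiv.Perm (Fin n × Fin 2)) (ia jb : Fin n × Fin 2) :
    Matrix (Fin 2 × Fin 2) (Fin n × Fin 2) R :=
  fun t q => if t = (1, 0) ∧ σ ia = q then -1 else if t = (1, 1) ∧ σ jb = q then -1 else 0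

/-- The reindexing equivalence splitting off the two new crossings. -/
def reidx (n : ℕ) : (Fin n × Fin 2) ⊕ (Fin 2 × Fin 2) ≃ Fin (n + 2) × Fin 2 :=
  (Equiv.sumProdDistrib (Fin n) (Fin 2) (Fin 2)).symm.trans
    (finSumFinEquiv.prodCongr (Equiv.refl (Fin 2)))

lemma reidx_inl (p : Fin n × Fin 2) :
    reidx n (Sum.inl p) = (Fin.castAdd 2 p.1, p.2) := by
  simp [reidx, Equiv.sumProdDistrib, finSumFinEquiv_apply_left, Prod.map]

lemma reidx_inr (s : Fin 2 × Fin 2) :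
    reidx n (Sum.inr s) = (Fin.natAdd n s.1, s.2) := by
  simp [reidx, Equiv.sumProdDistrib, finSumFinEquiv_apply_right, Prod.map]

end RIIAux

open RIIAux in
/-- Invariance of `det(M − P)` under Reidemeister move II: inserting one positive and one
negative crossing `c₁ = n`, `c₂ = n+1` through which the two strands at `(i,a)` and `(j,b)`
pass (one on the left side of both new crossings, the other on the right) does not change
the determinant. -/
theorem det_reidemeister_II {R : Type*} [CommRing R] (x y : Rˣ)
    (n : ℕ) (hn : 1 ≤ n) (ε : Fin n → Bool) (σ : Equiv.Perm (Fin n × Fin 2))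
    (ia jb : Fin n × Fin 2) (hij : ia ≠ jb)
    (ε' : Fin (n + 2) → Bool)
    (hε'old : ∀ i : Fin n, ε' (Fin.castAdd 2 i) = ε i)
    (hε'c₁ : ε' ⟨n, by omega⟩ = true)
    (hε'c₂ : ε' ⟨n + 1, by omega⟩ = false)
    (σ' : Equiv.Perm (Fin (n + 2) × Fin 2))
    (h1 : σ' (Fin.castAdd 2 ia.1, ia.2) = (⟨n, by omega⟩, 0))
    (h2 : σ' (⟨n, by omega⟩, 0) = (⟨n + 1, by omega⟩, 0))
    (h3 : σ' (⟨n + 1, by omega⟩, 0) = (Fin.castAdd 2 (σ ia).1, (σ ia).2))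
    (h4 : σ' (Fin.castAdd 2 jb.1, jb.2) = (⟨n, by omega⟩, 1))
    (h5 : σ' (⟨n, by omega⟩, 1) = (⟨n + 1, by omega⟩, 1))
    (h6 : σ' (⟨n + 1, by omega⟩, 1) = (Fin.castAdd 2 (σ jb).1, (σ jb).2))
    (h7 : ∀ p : Fin n × Fin 2, p ≠ ia → p ≠ jb →
      σ' (Fin.castAdd 2 p.1, p.2) = (Fin.castAdd 2 (σ p).1, (σ p).2)) :
    (blockDiag (fun i => if ε' i then Mpos x y else Mneg x y) - permMat R σ').det
      = (blockDiag (fun i => if ε i then Mpos x y else Mneg x y) - permMat R σ).det := by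
    classical
  set c1 : Fin (n + 2) := ⟨n, by omega⟩ with hc1
  set c2 : Fin (n + 2) := ⟨n + 1, by omega⟩ with hc2
  set blkO : Fin n → Matrix (Fin 2) (Fin 2) R := fun i => if ε i then Mpos x y else Mneg x y
    with hblkO
  set blkN : Fin (n + 2) → Matrix (Fin 2) (Fin 2) R :=
    fun i => if ε' i then Mpos x y else Mneg x y with hblkN
  have hna0 : Fin.natAdd n (0 : Fin 2) = c1 := by
    rw [hc1]; ext; simp
  have hna1 : Fin.natAdd n (1 : Fin 2) = c2 := by
    rw [hc2]; ext; simp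
  have hne1 : ∀ q : Fin n, c1 ≠ Fin.castAdd 2 q := by
    intro q h
    have hv := congrArg Fin.val h
    have hq := q.isLt
    simp [hc1] at hv
    omega
  have hne2 : ∀ q : Fin n, c2 ≠ Fin.castAdd 2 q := by
    intro q h
    have hv := congrArg Fin.val h
    have hq := q.isLt
    simp [hc2] at hv
    omega
  have hcastinj : ∀ a b : Fin n, Fin.castAdd 2 a = Fin.castAdd 2 b ↔ a = b := by
    intro a b
    constructor
    · intro h
      ext
      have : (Fin.castAdd 2 a).val = (Fin.castAdd 2 b).val := congrArg Fin.val h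
      simpa using this
    · intro h; rw [h]
  have hcastnat : ∀ (a : Fin n) (b : Fin 2), Fin.castAdd 2 a ≠ Fin.natAdd n b := by
    intro a b h
    have hv := congrArg Fin.val h
    have ha := a.isLt
    simp at hv
    omega
  have hval : ∀ a b : Fin 2, Fin.natAdd n a = Fin.natAdd n b ↔ a = b := by
    intro a b
    constructor
    · intro h
      ext
      have : (Fin.natAdd n a).val = (Fin.natAdd n b).val := congrArg Fin.val h
      simp at this
      omega
    · intro h; rw [h]
  have hσc1 : ∀ a : Fin 2, σ' (c1, a) = (c2, a) := by
    intro a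
    fin_cases a
    · exact h2
    · exact h5
  -- the four blocks
  set Bm : Matrix (Fin 2 × Fin 2) (Fin 2 × Fin 2) R := BM x y with hBm
  set Bi : Matrix (Fin 2 × Fin 2) (Fin 2 × Fin 2) R := (B4inv x y).submatrix e4 e4 with hBi
  have hBmBi : Bm * Bi = 1 := by
    rw [hBm, hBi, BM_eq, Matrix.submatrix_mul_equiv, B4_mul_B4inv, Matrix.submatrix_one_equiv]
  have hBiBm : Bi * Bm = 1 := by
    rw [hBm, hBi, BM_eq, Matrix.submatrix_mul_equiv, B4inv_mul_B4, Matrix.submatrix_one_equiv]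
  letI : Invertible Bm := ⟨Bi, hBiBm, hBmBi⟩
  have hdetBm : Bm.det = 1 := by
    rw [hBm, BM_eq, Matrix.det_submatrix_equiv_self, det_B4]
  -- the key block decomposition
  have key : (blockDiag blkN - permMat R σ').submatrix (reidx n) (reidx n)
      = Matrix.fromBlocks (A11 blkO σ ia jb) (CM R ia jb) (DM R σ ia jb) Bm := by
    ext pq rs
    obtain p | s := pq <;> obtain q | t := rs
    · -- old/old
      rw [Matrix.submatrix_apply, reidx_inl, reidx_inl, Matrix.fromBlocks_apply₁₁]
      show blockDiag blkN _ _ - permMat R σ' _ _ = A11 blkO σ ia jb p q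
      rw [A11]
      congr 1
      · -- block-diagonal parts agree
        simp only [blockDiag, hcastinj, hblkN, hblkO, hε'old]
      · -- permutation parts agree
        simp only [permMat]
        by_cases hpia : p = ia
        · subst hpia
          rw [h1]
          rw [if_neg (by
            rintro h
            exact hne1 q.1 (congrArg Prod.fst h))]
          rw [if_neg (by rintro ⟨h, -⟩; exact h rfl)]
        · by_cases hpjb : p = jb
          · subst hpjb
            rw [h4]
            rw [if_neg (by
              rintro h
              exact hne1 q.1 (congrArg Prod.fst h))]
            rw [if_neg (by rintro ⟨-, h, -⟩; exact h rfl)]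
          · rw [h7 p hpia hpjb]
            have : ((Fin.castAdd 2 (σ p).1, (σ p).2) = (Fin.castAdd 2 q.1, q.2))
                ↔ (σ p = q) := by
              rw [Prod.ext_iff, Prod.ext_iff]
              simp [hcastinj]
            rw [if_congr this rfl rfl]
            simp [hpia, hpjb]
    · -- old/new
      rw [Matrix.submatrix_apply, reidx_inl, reidx_inr, Matrix.fromBlocks_apply₁₂]
      show blockDiag blkN _ _ - permMat R σ' _ _ = CM R ia jb p t
      rw [CM]
      simp only [blockDiag, permMat]
      rw [if_neg (hcastnat p.1 t.1)]
      by_cases hpia : p = ia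
      · subst hpia
        rw [h1]
        by_cases ht : t = (0, 0)
        · subst ht
          rw [if_pos (by rw [← hna0]), if_pos ⟨rfl, rfl⟩]
          ring
        · rw [if_neg, if_neg (by rintro ⟨-, h⟩; exact ht h), if_neg (by
            rintro ⟨h, -⟩
            exact hij h)]
          · ring
          · intro h
            apply ht
            have h1' := congrArg Prod.fst h
            have h2' := congrArg Prod.snd h
            have hv := congrArg Fin.val h1'
            simp [hc1] at hv
            have : t.1 = 0 := by ext; simp [← hv]
            rw [Prod.ext_iff]
            exact ⟨this, h2'.symm⟩
      · by_cases hpjb : p = jb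
        · subst hpjb
          rw [h4]
          by_cases ht : t = (0, 1)
          · subst ht
            rw [if_pos (by rw [← hna0]), if_neg (by rintro ⟨h, -⟩; exact hpia h),
              if_pos ⟨rfl, rfl⟩]
            ring
          · rw [if_neg, if_neg (by rintro ⟨h, -⟩; exact hpia h), if_neg (by
              rintro ⟨-, h⟩
              exact ht h)]
            · ring
            · intro h
              apply ht
              have h1' := congrArg Prod.fst h
              have h2' := congrArg Prod.snd h
              have hv := congrArg Fin.val h1'
              simp [hc1] at hv
              have : t.1 = 0 := by ext; simp [← hv]
              rw [Prod.ext_iff]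
              exact ⟨this, h2'.symm⟩
        · rw [h7 p hpia hpjb]
          rw [if_neg (by
            intro h
            exact hcastnat (σ p).1 t.1 (congrArg Prod.fst h)),
            if_neg (by rintro ⟨h, -⟩; exact hpia h),
            if_neg (by rintro ⟨h, -⟩; exact hpjb h)]
          ring
    · -- new/old
      rw [Matrix.submatrix_apply, reidx_inr, reidx_inl, Matrix.fromBlocks_apply₂₁]
      show blockDiag blkN _ _ - permMat R σ' _ _ = DM R σ ia jb s q
      rw [DM]
      simp only [blockDiag, permMat]
      rw [if_neg (fun h => hcastnat q.1 s.1 h.symm)]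
      obtain ⟨s1, s2⟩ := s
      fin_cases s1
      · -- row (c₁, s2): image is (c₂, s2), never an old index
        rw [show (Fin.natAdd n (⟨0, by omega⟩ : Fin 2), s2) = ((c1 : Fin (n+2)), s2) by
            rw [← hna0]; rfl,
          hσc1]
        rw [if_neg (by
          intro h
          exact hne2 q.1 (congrArg Prod.fst h)), if_neg (by
          rintro ⟨h, -⟩
          have := congrArg Prod.fst h
          simp at this), if_neg (by
          rintro ⟨h, -⟩
          have := congrArg Prod.fst h
          simp at this)]
        ring
      · -- row (c₂, s2)
        rw [show (Fin.natAdd n (⟨1, by omega⟩ : Fin 2), s2) = ((c2 : Fin (n+2)), s2) by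
            rw [← hna1]; rfl]
        fin_cases s2
        · rw [show ((c2 : Fin (n+2)), (⟨0, by omega⟩ : Fin 2)) = (c2, 0) from rfl, h3]
          have hcnd : ((Fin.castAdd 2 (σ ia).1, (σ ia).2) = (Fin.castAdd 2 q.1, q.2))
              ↔ (σ ia = q) := by
            rw [Prod.ext_iff, Prod.ext_iff]
            simp [hcastinj]
          rw [if_congr hcnd rfl rfl]
          by_cases hq : σ ia = q
          · rw [if_pos hq, if_pos ⟨rfl, hq⟩]
            ring
          · rw [if_neg hq, if_neg (by rintro ⟨-, h⟩; exact hq h), if_neg (by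
              rintro ⟨h, -⟩
              have := congrArg Prod.snd h
              simp at this)]
            ring
        · rw [show ((c2 : Fin (n+2)), (⟨1, by omega⟩ : Fin 2)) = (c2, 1) from rfl, h6]
          have hcnd : ((Fin.castAdd 2 (σ jb).1, (σ jb).2) = (Fin.castAdd 2 q.1, q.2))
              ↔ (σ jb = q) := by
            rw [Prod.ext_iff, Prod.ext_iff]
            simp [hcastinj]
          rw [if_congr hcnd rfl rfl]
          by_cases hq : σ jb = q
          · rw [if_pos hq, if_neg (by
              rintro ⟨h, -⟩
              have := congrArg Prod.snd h
              simp at this), if_pos ⟨rfl, hq⟩]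
            ring
          · rw [if_neg hq, if_neg (by
              rintro ⟨h, -⟩
              have := congrArg Prod.snd h
              simp at this), if_neg (by rintro ⟨-, h⟩; exact hq h)]
            ring
    · -- new/new
      rw [Matrix.submatrix_apply, reidx_inr, reidx_inr, Matrix.fromBlocks_apply₂₂]
      show blockDiag blkN _ _ - permMat R σ' _ _ = Bm s t
      rw [hBm, BM]
      simp only [blockDiag, permMat]
      congr 1
      · -- block-diagonal parts
        simp only [hval]
        obtain ⟨s1, s2⟩ := s
        fin_cases s1
        · rw [show Fin.natAdd n (⟨0, by omega⟩ : Fin 2) = c1 from by rw [← hna0]; rfl]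
          rw [hblkN]
          simp [hε'c₁]
        · rw [show Fin.natAdd n (⟨1, by omega⟩ : Fin 2) = c2 from by rw [← hna1]; rfl]
          rw [hblkN]
          simp [hε'c₂]
      · -- permutation parts
        obtain ⟨s1, s2⟩ := s
        fin_cases s1
        · rw [show ((Fin.natAdd n (⟨0, by omega⟩ : Fin 2), s2) : Fin (n+2) × Fin 2)
              = (c1, s2) from by rw [← hna0]; rfl, hσc1]
          have hcnd : ((c2, s2) = (Fin.natAdd n t.1, t.2)) ↔ (t = (1, s2)) := by
            constructor
            · intro h
              have h1' := congrArg Prod.fst h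
              have h2' := congrArg Prod.snd h
              have hv := congrArg Fin.val h1'
              simp [hc2] at hv
              have ht1 : t.1 = 1 := by ext; simp; omega
              rw [Prod.ext_iff]
              exact ⟨ht1, h2'.symm⟩
            · intro h
              rw [h, ← hna1]
          rw [if_congr hcnd rfl rfl]
          simp
        · rw [show ((Fin.natAdd n (⟨1, by omega⟩ : Fin 2), s2) : Fin (n+2) × Fin 2)
              = (c2, s2) from by rw [← hna1]; rfl]
          have himg : ∃ r : Fin n × Fin 2, σ' (c2, s2) = (Fin.castAdd 2 r.1, r.2) := by
            fin_cases s2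
            · exact ⟨σ ia, h3⟩
            · exact ⟨σ jb, h6⟩
          obtain ⟨r, hr⟩ := himg
          rw [hr]
          rw [if_neg (by
            intro h
            exact hcastnat r.1 t.1 (congrArg Prod.fst h)),
            if_neg (by
              rintro ⟨h, -⟩
              have := congrArg Fin.val h
              simp at this)]
  -- the Schur complement is the original matrix
  have hAint : A11 blkO σ ia jb - CM R ia jb * ⅟Bm * DM R σ ia jb
      = blockDiag blkO - permMat R σ := by
    have hinv : (⅟Bm : Matrix (Fin 2 × Fin 2) (Fin 2 × Fin 2) R) = Bi := rfl
    rw [hinv]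
    have hB00 : Bi (0, 0) (1, 0) = 1 := by
      rw [hBi]; rfl
    have hB01 : Bi (0, 0) (1, 1) = 0 := by
      rw [hBi]; rfl
    have hB10 : Bi (0, 1) (1, 0) = 0 := by
      rw [hBi]; rfl
    have hB11 : Bi (0, 1) (1, 1) = 1 := by
      rw [hBi]; rfl
    have hCMBi : CM R ia jb * Bi
        = fun p t => (if p = ia then -Bi (0, 0) t else 0)
          + (if p = jb then -Bi (0, 1) t else 0) := by
      ext p t
      rw [Matrix.mul_apply, Fintype.sum_prod_type]
      simp only [Fin.sum_univ_two, CM]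
      simp only [Prod.mk.injEq, and_true, and_false, if_false, if_true, eq_self_iff_true,
        Fin.zero_eq_one_iff, Fin.one_eq_zero_iff, Nat.succ_ne_self, OfNat.ofNat_ne_one,
        one_ne_zero, zero_ne_one, true_and, false_and]
      split_ifs <;> ring
    ext p q
    have hcbd : (CM R ia jb * Bi * DM R σ ia jb) p q
        = (if p = ia ∧ σ ia = q then 1 else 0) + (if p = jb ∧ σ jb = q then 1 else 0) := by
      rw [Matrix.mul_apply, hCMBi, Fintype.sum_prod_type]
      simp only [Fin.sum_univ_two, DM]
      simp only [Prod.mk.injEq, Fin.zero_eq_one_iff, Fin.one_eq_zero_iff, Nat.succ_ne_self,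
        one_ne_zero, zero_ne_one, false_and, true_and, and_false, and_true, if_false,
        if_true, eq_self_iff_true, hB00, hB01, hB10, hB11]
      by_cases hA : p = ia <;> by_cases hB : p = jb <;>
        by_cases hC : σ ia = q <;> by_cases hD : σ jb = q <;>
        first
          | (exact absurd (hA.symm.trans hB) hij)
          | (simp [hA, hB, hC, hD, hij, hij.symm] <;> ring1)
    rw [Matrix.sub_apply, Matrix.sub_apply, hcbd, A11]
    have hsum : ((if p ≠ ia ∧ p ≠ jb ∧ σ p = q then (1 : R) else 0)
        + ((if p = ia ∧ σ ia = q then (1 : R) else 0)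
          + (if p = jb ∧ σ jb = q then (1 : R) else 0)))
        = (if σ p = q then 1 else 0) := by
      by_cases hpia : p = ia
      · subst hpia
        simp [hij]
      · by_cases hpjb : p = jb
        · subst hpjb
          simp [hpia]
        · simp [hpia, hpjb]
    simp only [permMat]
    linear_combination -hsum
  calc (blockDiag blkN - permMat R σ').det
      = ((blockDiag blkN - permMat R σ').submatrix (reidx n) (reidx n)).det := by
        rw [Matrix.det_submatrix_equiv_self]
    _ = (Matrix.fromBlocks (A11 blkO σ ia jb) (CM R ia jb) (DM R σ ia jb) Bm).det := by
        rw [key]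
    _ = Bm.det * (A11 blkO σ ia jb - CM R ia jb * ⅟Bm * DM R σ ia jb).det :=
        Matrix.det_fromBlocks₂₂ _ _ _ _
    _ = (blockDiag blkO - permMat R σ).det := by
        rw [hdetBm, hAint, one_mul]
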